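/- Let A be a discrete valuation ring with fraction field K, and let L/K be a finite field extension. Then the integral closure B of A in L is a Dedekind domain, and for every maximal ideal q of B, the localization B_q is a discrete valuation ring. -/

import Mathlib

set_option maxHeartbeats 1000000
set_option synthInstance.maxHeartbeats 400000

open Submodule

theorem KA_aux1 {A : Type*} (K : Type*) {L : Type*} [CommRing A] [IsDomain A]
    [IsDiscreteValuationRing A] [Field K] [Algebra A K] [IsFractionRing A K]
    [Field L] [Algebra K L] [FiniteDimensional K L]
    [Algebra A L] [IsScalarTower A K L] (ϖ : A) (hϖ : Irreducible ϖ) :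
    IsNoetherian A ((integralClosure A L) ⧸
      (Ideal.span {ϖ} • (⊤ : Submodule A (integralClosure A L)))) := by
  classical
  set B := integralClosure A L with hB
  set I : Ideal A := Ideal.span {ϖ} with hI
  haveI hImax : I.IsMaximal := by
    rw [hI, ← (IsDiscreteValuationRing.irreducible_iff_uniformizer ϖ).mp hϖ]
    exact IsLocalRing.maximalIdeal.isMaximal A
  set N : Submodule A B := I • (⊤ : Submodule A B) with hN
  set M₁ := B ⧸ N with hM₁
  letI : Field (A ⧸ I) := Ideal.Quotient.field I
  have hinjL : Function.Injective (algebraMap A L) := by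
    rw [IsScalarTower.algebraMap_eq A K L]
    exact (algebraMap K L).injective.comp (IsFractionRing.injective A K)
  have hrank : Module.rank (A ⧸ I) M₁ ≤ Module.finrank K L := by
    apply _root_.rank_le
    intro s li
    have hsurj : Function.Surjective (Submodule.Quotient.mk (p := N)) :=
      Submodule.Quotient.mk_surjective N
    choose b hb using fun i : s => hsurj (i : M₁)
    have hliL : LinearIndependent A (fun i : s => ((b i : B) : L)) := by
      rw [linearIndependent_iff']
      intro t g hsum j hj
      by_contra hg
      set J : Ideal A := Ideal.span (g '' ↑t) with hJ
      have hne : J ≠ ⊥ := by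
        simp only [hJ, Ne, Ideal.span_eq_bot]
        push_neg
        exact ⟨g j, ⟨j, by simpa using hj, rfl⟩, hg⟩
      set d := Submodule.IsPrincipal.generator J with hd
      have hspan : Ideal.span {d} = J := Submodule.IsPrincipal.span_singleton_generator J
      have hdne : d ≠ 0 := by
        intro h
        exact hne (by rw [← hspan, h, Ideal.span_singleton_eq_bot])
      have hgJ : ∀ i ∈ t, g i ∈ J := fun i hi => Ideal.subset_span ⟨i, by simpa using hi, rfl⟩
      have hex : ∀ i : s, ∃ a, i ∈ t → g i = d * a := by
        intro i
        by_cases hi : i ∈ t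
        · have := hgJ i hi
          rw [← hspan] at this
          rcases Ideal.mem_span_singleton'.mp this with ⟨a, ha⟩
          exact ⟨a, fun _ => by rw [← ha, mul_comm]⟩
        · exact ⟨0, fun h' => absurd h' hi⟩
      choose c hc using hex
      have hd0 : algebraMap A L d ≠ 0 := fun h => hdne (hinjL (by simpa using h))
      have hsumL : ∑ i ∈ t, c i • ((b i : B) : L) = 0 := by
        have hsum2 : (algebraMap A L d) * ∑ i ∈ t, c i • ((b i : B) : L) = 0 := by
          rw [Finset.mul_sum, ← hsum]
          refine Finset.sum_congr rfl fun i hi => ?_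
          rw [hc i hi, Algebra.smul_def, Algebra.smul_def, map_mul, mul_assoc]
        rcases mul_eq_zero.mp hsum2 with h | h
        · exact absurd h hd0
        · exact h
      have hsumB : ∑ i ∈ t, c i • b i = 0 := by
        apply Subtype.coe_injective
        push_cast
        simpa using hsumL
      have hsumM : ∑ i ∈ t, (Ideal.Quotient.mk I (c i)) • ((i : s) : M₁) = 0 := by
        have h1 := congrArg (N.mkQ) hsumB
        rw [map_sum, map_zero] at h1
        rw [← h1]
        refine Finset.sum_congr rfl fun i hi => ?_
        rw [map_smul]
        have : N.mkQ (b i) = (i : M₁) := hb i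
        rw [this]
        exact (algebraMap_smul (A ⧸ I) (c i) ((i : s) : M₁)).symm
      have hall := linearIndependent_iff'.mp li t (fun i => Ideal.Quotient.mk I (c i)) hsumM
      have hgmem : ∀ i ∈ t, g i ∈ Ideal.span {d} * I := by
        intro i hi
        rw [hc i hi]
        refine Ideal.mul_mem_mul (Ideal.mem_span_singleton_self d) ?_
        have := hall i hi
        rwa [Ideal.Quotient.eq_zero_iff_mem] at this
      have hJle : J ≤ Ideal.span {d} * I := by
        rw [hJ, Ideal.span_le]
        rintro x ⟨i, hi, rfl⟩
        exact hgmem i (by simpa using hi)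
      have hdmem : d ∈ Ideal.span {d} * I := hJle (Submodule.IsPrincipal.generator_mem J)
      rcases Ideal.mem_span_singleton_mul.mp hdmem with ⟨y, hy, hyd⟩
      have hy1 : y = 1 := mul_left_cancel₀ hdne (by rw [hyd, mul_one])
      exact hImax.ne_top (I.eq_top_iff_one.mpr (hy1 ▸ hy))
    have hliK : LinearIndependent K (fun i : s => ((b i : B) : L)) :=
      (LinearIndependent.iff_fractionRing A K).mp hliL
    simpa using hliK.fintype_card_le_finrank
  haveI : Module.Finite (A ⧸ I) M₁ :=
    Module.rank_lt_aleph0_iff.mp (lt_of_le_of_lt hrank (Cardinal.nat_lt_aleph0 _))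
  haveI : Module.Finite A (A ⧸ I) :=
    Module.Finite.of_surjective (Submodule.mkQ (I.restrictScalars A)) (Submodule.mkQ_surjective _)
  haveI : Module.Finite A M₁ := Module.Finite.trans (A ⧸ I) M₁
  exact isNoetherian_of_isNoetherianRing_of_finite A M₁

theorem KA_aux2 {A : Type*} (K : Type*) {L : Type*} [CommRing A] [IsDomain A]
    [IsDiscreteValuationRing A] [Field K] [Algebra A K] [IsFractionRing A K]
    [Field L] [Algebra K L] [FiniteDimensional K L]
    [Algebra A L] [IsScalarTower A K L] (ϖ : A) (hϖ : Irreducible ϖ) (k : ℕ) :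
    IsNoetherian A ((integralClosure A L) ⧸
      ((Ideal.span {(algebraMap A (integralClosure A L) ϖ) ^ k}).restrictScalars A)) := by
  classical
  set B := integralClosure A L with hB
  set π : B := algebraMap A B ϖ with hπ
  have hinjL : Function.Injective (algebraMap A L) := by
    rw [IsScalarTower.algebraMap_eq A K L]
    exact (algebraMap K L).injective.comp (IsFractionRing.injective A K)
  have hinjB : Function.Injective (algebraMap A B) := by
    intro x y h
    apply hinjL
    have := congrArg (Subalgebra.val _) h
    simpa using this
  have hπ0 : π ≠ 0 := by
    intro h
    exact hϖ.ne_zero (hinjB (by simpa using h))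
  -- the case k = 1 via KA_aux1
  have base : IsNoetherian A (B ⧸ ((Ideal.span {π}).restrictScalars A)) := by
    have heq : (Ideal.span {ϖ} • (⊤ : Submodule A B)) = (Ideal.span {π}).restrictScalars A := by
      apply le_antisymm
      · refine Submodule.smul_le.mpr fun a ha b _ => ?_
        rcases Ideal.mem_span_singleton.mp ha with ⟨c, rfl⟩
        refine Ideal.mem_span_singleton.mpr ⟨algebraMap A B c * b, ?_⟩
        rw [Algebra.smul_def, map_mul]
        ring
      · intro x hx
        rcases Ideal.mem_span_singleton.mp (hx : x ∈ Ideal.span {π}) with ⟨c, rfl⟩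
        have : π * c = ϖ • c := by rw [Algebra.smul_def]
        rw [this]
        exact Submodule.smul_mem_smul (Ideal.mem_span_singleton_self ϖ) trivial
    haveI := KA_aux1 (L := L) K ϖ hϖ
    exact isNoetherian_of_linearEquiv (Submodule.quotEquivOfEq _ _ heq)
  induction k with
  | zero =>
    haveI : Subsingleton (B ⧸ ((Ideal.span {π ^ 0}).restrictScalars A)) := by
      rw [Submodule.Quotient.subsingleton_iff]
      simp [Ideal.span_singleton_one]
    infer_instance
  | succ k ih =>
    set Nk := (Ideal.span {π ^ k}).restrictScalars A with hNk
    set Nk1 := (Ideal.span {π ^ (k + 1)}).restrictScalars A with hNk1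
    set N1 := (Ideal.span {π}).restrictScalars A with hN1
    -- f : B/N1 → B/Nk1 induced by multiplication by π^k
    have hle1 : N1 ≤ Nk1.comap (LinearMap.mulLeft A (π ^ k)) := by
      intro x hx
      rcases Ideal.mem_span_singleton.mp hx with ⟨c, rfl⟩
      simp only [Submodule.mem_comap, LinearMap.mulLeft_apply, Submodule.restrictScalars_mem]
      exact Ideal.mem_span_singleton.mpr ⟨c, by ring⟩
    have hlek : Nk1 ≤ Nk := by
      intro x hx
      rcases Ideal.mem_span_singleton.mp (hx : x ∈ Ideal.span {π ^ (k+1)}) with ⟨c, rfl⟩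
      exact Ideal.mem_span_singleton.mpr ⟨π * c, by ring⟩
    set f : (B ⧸ N1) →ₗ[A] (B ⧸ Nk1) := Submodule.mapQ N1 Nk1 (LinearMap.mulLeft A (π ^ k)) hle1
      with hf
    set g : (B ⧸ Nk1) →ₗ[A] (B ⧸ Nk) := Submodule.mapQ Nk1 Nk LinearMap.id hlek with hg
    haveI := base
    haveI := ih
    refine isNoetherian_of_range_eq_ker f g ?_
    ext x
    induction x using Submodule.Quotient.induction_on with
    | H b =>
      simp only [LinearMap.mem_range, LinearMap.mem_ker]
      constructor
      · rintro ⟨y, hy⟩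
        induction y using Submodule.Quotient.induction_on with
        | H c =>
          rw [hf] at hy
          rw [hg]
          have hy' : Submodule.Quotient.mk (p := Nk1) (π ^ k * c) = Submodule.Quotient.mk b := by
            simpa [Submodule.mapQ_apply] using hy
          have hd : b - π ^ k * c ∈ Nk1 := by
            rw [← Submodule.Quotient.eq (p := Nk1)] at *
            exact hy'.symm
          rcases Ideal.mem_span_singleton.mp (hd : _ ∈ Ideal.span {π ^ (k+1)}) with ⟨e, he⟩
          have hb : b ∈ Nk := Ideal.mem_span_singleton.mpr
            ⟨c + π * e, by linear_combination he⟩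
          simp only [Submodule.mapQ_apply, LinearMap.id_coe, id_eq]
          rwa [Submodule.Quotient.mk_eq_zero]
      · intro hx
        rw [hg] at hx
        have hb : b ∈ Nk := by
          have : Submodule.Quotient.mk (p := Nk) b = 0 := by
            simpa [Submodule.mapQ_apply] using hx
          rwa [Submodule.Quotient.mk_eq_zero] at this
        rcases Ideal.mem_span_singleton.mp (hb : b ∈ Ideal.span {π ^ k}) with ⟨c, rfl⟩
        refine ⟨Submodule.Quotient.mk c, ?_⟩
        rw [hf]
        simp [Submodule.mapQ_apply]

theorem KA_noeth {A : Type*} (K : Type*) {L : Type*} [CommRing A] [IsDomain A]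
    [IsDiscreteValuationRing A] [Field K] [Algebra A K] [IsFractionRing A K]
    [Field L] [Algebra K L] [FiniteDimensional K L]
    [Algebra A L] [IsScalarTower A K L] :
    IsNoetherianRing (integralClosure A L) := by
  classical
  set B := integralClosure A L with hB
  obtain ⟨ϖ, hϖ⟩ := IsDiscreteValuationRing.exists_irreducible A
  set π : B := algebraMap A B ϖ with hπ
  haveI : Algebra.IsIntegral A B := IsIntegralClosure.isIntegral_algebra A L
  rw [isNoetherianRing_iff, isNoetherian_def]
  intro J
  by_cases hJ : J = ⊥
  · rw [hJ]; exact Submodule.fg_bot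
  have hne : (Ideal.comap (algebraMap A B) J) ≠ ⊥ := by
    obtain ⟨x, hxJ, hx0⟩ := Submodule.exists_mem_ne_zero_of_ne_bot hJ
    exact Ideal.comap_ne_bot_of_integral_mem hx0 hxJ (Algebra.IsIntegral.isIntegral x)
  obtain ⟨a, haJ, ha0⟩ := Submodule.exists_mem_ne_zero_of_ne_bot hne
  obtain ⟨n, u, hu⟩ := IsDiscreteValuationRing.eq_unit_mul_pow_irreducible ha0 hϖ
  have hπn : π ^ n ∈ J := by
    have hmem : algebraMap A B a ∈ J := haJ
    rw [hu, map_mul, map_pow] at hmem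
    exact (Ideal.unit_mul_mem_iff_mem J (u.isUnit.map (algebraMap A B))).mp hmem
  have hle : Ideal.span {π ^ n} ≤ J := (Ideal.span_singleton_le_iff_mem J).mpr hπn
  haveI h1 : IsNoetherian A (B ⧸ (Ideal.span {π ^ n}).restrictScalars A) := KA_aux2 K ϖ hϖ n
  haveI h2 : IsNoetherian A (B ⧸ Ideal.span {π ^ n}) :=
    isNoetherian_of_linearEquiv (Submodule.Quotient.restrictScalarsEquiv A (Ideal.span {π ^ n}))
  haveI h3 : IsNoetherian B (B ⧸ Ideal.span {π ^ n}) := isNoetherian_of_tower A h2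
  apply Submodule.fg_of_fg_map_of_fg_inf_ker (Ideal.span {π ^ n}).mkQ
  · exact IsNoetherian.noetherian _
  · rw [Submodule.ker_mkQ, inf_eq_right.mpr hle]
    exact Submodule.fg_span_singleton _

/-- Krull–Akizuki: the integral closure of a DVR in a finite extension of its fraction
field is a Dedekind domain, and its localization at any maximal ideal is a DVR. -/
theorem stmt_10 {A K L : Type*} [CommRing A] [IsDomain A] [IsDiscreteValuationRing A]
    [Field K] [Algebra A K] [IsFractionRing A K]
    [Field L] [Algebra K L] [FiniteDimensional K L]
    [Algebra A L] [IsScalarTower A K L] :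
    IsDedekindDomain (integralClosure A L) ∧
    ∀ q : Ideal (integralClosure A L), (hq : q.IsMaximal) →
      letI := hq.isPrime
      IsDiscreteValuationRing (Localization.AtPrime q) := by
  haveI : IsNoetherianRing (integralClosure A L) := KA_noeth (L := L) K
  haveI : IsFractionRing (integralClosure A L) L :=
    integralClosure.isFractionRing_of_finite_extension K L
  haveI : IsIntegrallyClosed (integralClosure A L) :=
    integralClosure.isIntegrallyClosedOfFiniteExtension K
  haveI hdd : IsDedekindDomain (integralClosure A L) := by
    rw [isDedekindDomain_iff _ L]
    exact ⟨inferInstance, inferInstance, inferInstance,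
      fun hx => (isIntegrallyClosed_iff L).mp inferInstance hx⟩
  refine ⟨hdd, fun q hq => ?_⟩
  letI := hq.isPrime
  have hnf : ¬ IsField (integralClosure A L) := by
    intro hf
    haveI : Algebra.IsIntegral A (integralClosure A L) := IsIntegralClosure.isIntegral_algebra A L
    have : Function.Injective (algebraMap A (integralClosure A L)) := by
      intro x y h
      have hinjL : Function.Injective (algebraMap A L) := by
        rw [IsScalarTower.algebraMap_eq A K L]
        exact (algebraMap K L).injective.comp (IsFractionRing.injective A K)
      apply hinjL
      simpa using congrArg (Subalgebra.val _) h
    exact IsDiscreteValuationRing.not_isField A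
      ((Algebra.IsIntegral.isField_iff_isField this).mpr hf)
  have hne : q ≠ ⊥ := Ring.ne_bot_of_isMaximal_of_not_isField hq hnf
  exact IsLocalization.AtPrime.isDiscreteValuationRing_of_dedekind_domain _ hne _
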